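/- arXiv:2307.13759 — 3 statements merged into one kernel-verified Lean document; each statement's English description precedes it below -/
import Mathlib

section
/- Let G₁, G₂, G_T be commutative groups of exponent p (prime) and e : G₁ → G₂ → G_T a bilinear map (e(g^a, h^b) = e(g,h)^{a·b} with ZMod p exponents, multiplicative in each argument). Let g₁ ∈ G₁, g₂, w ∈ G₂, h ∈ G₁, and γ, x, y, α ∈ ZMod p with w = g₂^γ. Suppose A ∈ G₁ satisfies e(A, w * g₂^x) = e(g₁ * h^{-y}, g₂), and set B = A * h^α. Then e(g₁, g₂) = e(B, w) * e(B, g₂)^x * e(h, w)^{-α} * e(h, g₂)^{y - α·x}. -/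
def gpow {p : ℕ} {G : Type*} [CommGroup G] (g : G) (a : ZMod p) : G := g ^ a.val

section helpers
variable {p : ℕ} [Fact p.Prime] {G : Type*} [CommGroup G]

lemma pow_mod_exp (hexp : ∀ g : G, g ^ p = 1) (g : G) (n : ℕ) :
    g ^ n = g ^ (n % p) := by
  conv_lhs => rw [← Nat.div_add_mod n p]
  rw [pow_add, pow_mul, hexp, one_pow, one_mul]

lemma gpow_one' (g : G) : gpow g (1 : ZMod p) = g := by
  have : (1 : ZMod p).val = 1 := ZMod.val_one p
  simp [gpow, this]

lemma gpow_add (hexp : ∀ g : G, g ^ p = 1) (g : G) (a b : ZMod p) :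
    gpow g (a + b) = gpow g a * gpow g b := by
  unfold gpow
  rw [ZMod.val_add, ← pow_mod_exp hexp, pow_add]

lemma gpow_gpow (hexp : ∀ g : G, g ^ p = 1) (g : G) (a b : ZMod p) :
    gpow (gpow g a) b = gpow g (a * b) := by
  unfold gpow
  rw [ZMod.val_mul, ← pow_mod_exp hexp, ← pow_mul]

lemma gpow_zero (g : G) : gpow g (0 : ZMod p) = 1 := by
  simp [gpow]

lemma gpow_mul_base (g g' : G) (a : ZMod p) :
    gpow (g * g') a = gpow g a * gpow g' a := by
  unfold gpow; rw [mul_pow]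

end helpers

/-- The key pairing identity of AEE group-signature verification:
a credential `A` with `e(A, w·g₂^x) = e(g₁·h^{-y}, g₂)` blinded to `B = A·h^α`
satisfies the R₄ relation. -/
theorem stmt3 {p : ℕ} [Fact p.Prime]
    {G₁ G₂ GT : Type*} [CommGroup G₁] [CommGroup G₂] [CommGroup GT]
    (hexp₁ : ∀ g : G₁, g ^ p = 1) (hexp₂ : ∀ g : G₂, g ^ p = 1)
    (hexpT : ∀ g : GT, g ^ p = 1)
    (e : G₁ → G₂ → GT)
    (hbil : ∀ (g : G₁) (h : G₂) (a b : ZMod p),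
      e (gpow g a) (gpow h b) = gpow (e g h) (a * b))
    (hmul₁ : ∀ (g g' : G₁) (h : G₂), e (g * g') h = e g h * e g' h)
    (hmul₂ : ∀ (g : G₁) (h h' : G₂), e g (h * h') = e g h * e g h')
    (g₁ h A B : G₁) (g₂ w : G₂) (γ x y α : ZMod p)
    (hw : w = gpow g₂ γ)
    (hA : e A (w * gpow g₂ x) = e (g₁ * gpow h (-y)) g₂)
    (hB : B = A * gpow h α) :
    e g₁ g₂ =
      e B w * gpow (e B g₂) x * gpow (e h w) (-α) * gpow (e h g₂) (y - α * x) := by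
  have eL : ∀ (g : G₁) (k : G₂) (a : ZMod p), e (gpow g a) k = gpow (e g k) a := by
    intro g k a
    have := hbil g k a 1
    rwa [gpow_one', mul_one] at this
  have eR : ∀ (g : G₁) (k : G₂) (a : ZMod p), e g (gpow k a) = gpow (e g k) a := by
    intro g k a
    have := hbil g k 1 a
    rwa [gpow_one', one_mul] at this
  set T := e h g₂ with hT
  have hA' : e A w * gpow (e A g₂) x = e g₁ g₂ * gpow T (-y) := by
    rw [hmul₂, hmul₁, eR, eL] at hA; exact hA
  have h1 : e (gpow h α) w = gpow T (γ * α) := by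
    rw [eL, hw, eR, gpow_gpow hexpT]
  have h3 : gpow (e h w) (-α) = gpow T (γ * (-α)) := by
    rw [hw, eR, gpow_gpow hexpT]
  rw [hB, hmul₁, h1, hmul₁, gpow_mul_base, eL, gpow_gpow hexpT, h3]
  have key : e A w * gpow T (γ*α) * (gpow (e A g₂) x * gpow T (α*x)) * gpow T (γ*(-α)) * gpow T (y - α*x)
      = (e A w * gpow (e A g₂) x) * gpow T (γ*α + (α*x + (γ*(-α) + (y - α*x)))) := by
    rw [gpow_add hexpT, gpow_add hexpT, gpow_add hexpT]
    simp only [mul_assoc]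
    congr 1
    simp [mul_comm, mul_assoc, mul_left_comm]
  rw [key, hA']
  rw [show γ*α + (α*x + (γ*(-α) + (y - α*x))) = y by ring]
  rw [mul_assoc, ← gpow_add hexpT, neg_add_cancel, gpow_zero, mul_one]
end

section
/- Let G be a commutative group of exponent p (prime) with g ∈ G of order p, and let a, ξ, z ∈ ZMod p with a ≠ 0, ξ ≠ 0. Set g₁ = g^z, h = g^{a·ξ}. Suppose γ, x, Δx, y, Δy ∈ ZMod p satisfy γ + x ≠ 0, γ + Δx ≠ 0, and g^{(z - Δy·a·ξ)·(γ+Δx)⁻¹} = g^{(z - y·a·ξ)·(γ+x)⁻¹} (i.e., (g₁ h^{-Δy})^{1/(γ+Δx)} = (g₁ h^{-y})^{1/(γ+x)}). Then y = (z·(Δx - x) + Δy·a·ξ·(γ + x)) · ((γ + Δx)·a·ξ)⁻¹. -/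
lemma gpow_inj {p : ℕ} [Fact p.Prime] {G : Type*} [CommGroup G]
    (g : G) (hg : orderOf g = p) {u v : ZMod p} (h : gpow g u = gpow g v) :
    u = v := by
  unfold gpow at h
  rw [pow_eq_pow_iff_modEq, hg] at h
  have := (ZMod.natCast_eq_natCast_iff _ _ _).mpr h
  simpa [ZMod.natCast_val, ZMod.cast_id] using this

/-- Discrete-log extraction in the non-frameability proof of the AEE
protocol. -/
theorem stmt18 {p : ℕ} [Fact p.Prime] {G : Type*} [CommGroup G]
    (hexp : ∀ g : G, g ^ p = 1)
    (g : G) (hg : orderOf g = p)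
    (a ξ z γ x Δx y Δy : ZMod p)
    (ha : a ≠ 0) (hξ : ξ ≠ 0) (hγx : γ + x ≠ 0) (hγΔx : γ + Δx ≠ 0)
    (heq : gpow g ((z - Δy * a * ξ) * (γ + Δx)⁻¹) =
      gpow g ((z - y * a * ξ) * (γ + x)⁻¹)) :
    y = (z * (Δx - x) + Δy * a * ξ * (γ + x)) * ((γ + Δx) * a * ξ)⁻¹ := by
  have h := gpow_inj g hg heq
  field_simp at h ⊢
  linear_combination h
end

section
/- Let p be prime and x_1, …, x_q ∈ ZMod p be pairwise distinct, y_1, …, y_q ∈ ZMod p, and Δx ∈ ZMod p with Δx ∉ {x_1, …, x_q}. Suppose η, θ_1, …, θ_q are chosen independently and uniformly from ZMod p \ {0}. Define Q(-Δx) = η·∏_{i=1}^q (x_i - Δx) + ∑_{k=1}^q θ_k·(y_k - Δy)·∏_{j ≠ k} (x_j - Δx) for a fixed Δy ∈ ZMod p. Then the probability (over η, θ_1, …, θ_q) that Q(-Δx) = 0 is at most 1/(p-1). -/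
/-- Case 1 of the traceability reduction: the extracted value
`Q(-Δx) = η·∏(xᵢ-Δx) + ∑ θₖ(yₖ-Δy)∏_{j≠k}(xⱼ-Δx)` vanishes with probability
at most `1/(p-1)` over uniform nonzero `η, θ₁, …, θ_q`. -/
theorem stmt19 {p : ℕ} [Fact p.Prime] (q : ℕ)
    (x : Fin q → ZMod p) (hx : Function.Injective x)
    (y : Fin q → ZMod p) (Δx Δy : ZMod p)
    (hΔx : ∀ i, Δx ≠ x i) :
    ((Finset.univ.filter
        (fun ηθ : {z : ZMod p // z ≠ 0} × (Fin q → {z : ZMod p // z ≠ 0}) =>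
          (ηθ.1 : ZMod p) * ∏ i, (x i - Δx) +
            ∑ k, (ηθ.2 k : ZMod p) * (y k - Δy) *
              ∏ j ∈ Finset.univ.erase k, (x j - Δx) = 0)).card : ℚ) /
      ((Finset.univ :
        Finset ({z : ZMod p // z ≠ 0} × (Fin q → {z : ZMod p // z ≠ 0}))).card : ℚ) ≤
    1 / (p - 1 : ℚ) := by
  classical
  have hp : p.Prime := Fact.out
  have hp2 : 2 ≤ p := hp.two_le
  have hcne : (∏ i, (x i - Δx)) ≠ 0 :=
    Finset.prod_ne_zero_iff.mpr fun i _ => sub_ne_zero.mpr fun h => hΔx i h.symm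
  -- cardinality facts
  have hcard1 : Fintype.card {z : ZMod p // z ≠ 0} = p - 1 := by
    haveI : NeZero p := ⟨hp.ne_zero⟩
    have h0 : Fintype.card {z : ZMod p // ¬ z = 0} = p - 1 := by
      rw [Fintype.card_subtype_compl, Fintype.card_subtype_eq, ZMod.card]
    exact h0
  have hcard2 :
      Fintype.card ({z : ZMod p // z ≠ 0} × (Fin q → {z : ZMod p // z ≠ 0}))
        = (p - 1) * (p - 1) ^ q := by
    rw [Fintype.card_prod, Fintype.card_fun, hcard1, Fintype.card_fin]
  -- filter card bound: the map to the second component is injective on the filter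
  have hF : (Finset.univ.filter
        (fun ηθ : {z : ZMod p // z ≠ 0} × (Fin q → {z : ZMod p // z ≠ 0}) =>
          (ηθ.1 : ZMod p) * ∏ i, (x i - Δx) +
            ∑ k, (ηθ.2 k : ZMod p) * (y k - Δy) *
              ∏ j ∈ Finset.univ.erase k, (x j - Δx) = 0)).card ≤ (p - 1) ^ q := by
    have := Finset.card_le_card_of_injOn (f := Prod.snd)
      (s := Finset.univ.filter
        (fun ηθ : {z : ZMod p // z ≠ 0} × (Fin q → {z : ZMod p // z ≠ 0}) =>
          (ηθ.1 : ZMod p) * ∏ i, (x i - Δx) +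
            ∑ k, (ηθ.2 k : ZMod p) * (y k - Δy) *
              ∏ j ∈ Finset.univ.erase k, (x j - Δx) = 0))
      (t := Finset.univ)
      (fun a _ => Finset.mem_univ _)
      (by
        intro a ha b hb hab
        simp only [Finset.coe_filter, Set.mem_setOf_eq, Finset.mem_univ, true_and] at ha hb
        have hsum : (∑ k, (a.2 k : ZMod p) * (y k - Δy) *
              ∏ j ∈ Finset.univ.erase k, (x j - Δx))
            = ∑ k, (b.2 k : ZMod p) * (y k - Δy) *
              ∏ j ∈ Finset.univ.erase k, (x j - Δx) := by rw [hab]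
        have : (a.1 : ZMod p) * ∏ i, (x i - Δx) = (b.1 : ZMod p) * ∏ i, (x i - Δx) := by
          have := ha.trans hb.symm
          rw [hsum] at this
          linear_combination this
        have h1 : (a.1 : ZMod p) = b.1 := mul_right_cancel₀ hcne this
        exact Prod.ext (Subtype.ext h1) hab)
    calc _ ≤ (Finset.univ : Finset (Fin q → {z : ZMod p // z ≠ 0})).card := this
      _ = (p - 1) ^ q := by
          rw [Finset.card_univ, Fintype.card_fun, hcard1, Fintype.card_fin]
  rw [Finset.card_univ, hcard2]
  have hp1 : (0 : ℚ) < (p : ℚ) - 1 := by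
    have : (2 : ℚ) ≤ (p : ℚ) := by exact_mod_cast hp2
    linarith
  have hcast : (((p - 1) * (p - 1) ^ q : ℕ) : ℚ) = ((p : ℚ) - 1) * ((p : ℚ) - 1) ^ q := by
    push_cast [Nat.cast_sub (by omega : 1 ≤ p)]
    ring
  rw [hcast, div_le_div_iff₀ (by positivity) hp1]
  have hFQ : ((Finset.univ.filter
        (fun ηθ : {z : ZMod p // z ≠ 0} × (Fin q → {z : ZMod p // z ≠ 0}) =>
          (ηθ.1 : ZMod p) * ∏ i, (x i - Δx) +
            ∑ k, (ηθ.2 k : ZMod p) * (y k - Δy) *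
              ∏ j ∈ Finset.univ.erase k, (x j - Δx) = 0)).card : ℚ)
        ≤ ((p : ℚ) - 1) ^ q := by
    calc _ ≤ (((p - 1) ^ q : ℕ) : ℚ) := by exact_mod_cast hF
      _ = ((p : ℚ) - 1) ^ q := by push_cast [Nat.cast_sub (by omega : 1 ≤ p)]; ring
  nlinarith [pow_pos hp1 q]
end
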